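/- arXiv:2202.09060 — 3 statements merged into one kernel-verified Lean document; each statement's English description precedes it below -/
import Mathlib

section
/- Let a, b, c ∈ ℝ with a ≠ 0 and h > 0, and let Φ = a·I_N + c·W, Ψ = b·Δ, Φ_s = e^{ah}·I_N + (c/a)(e^{ah} − 1)·W, Ψ_s = (b/a)(e^{ah} − 1)·Δ. If the continuous-time pair (Φ, Ψ) satisfies the PBH condition, then the sampled-data pair (Φ_s, Ψ_s) is controllable. -/
open Matrix
open scoped Kronecker

/-- Entrywise complexification of a real matrix. -/
noncomputable def cpx {a b : Type*} (M : Matrix a b ℝ) : Matrix a b ℂ :=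
  M.map (Complex.ofReal)

/-- The matrix exponential `e^{M}`. -/
noncomputable def mexp {q : Type*} [Fintype q] [DecidableEq q]
    (M : Matrix q q ℝ) : Matrix q q ℝ :=
  NormedSpace.exp M

/-- The entrywise integral `∫₀ʰ e^{Aτ} dτ`. -/
noncomputable def intExp {q : Type*} [Fintype q] [DecidableEq q]
    (A : Matrix q q ℝ) (h : ℝ) : Matrix q q ℝ :=
  Matrix.of fun i j => ∫ τ in (0:ℝ)..h, (NormedSpace.exp (τ • A)) i j

/-- `θ` is an eigenvalue of the complex square matrix `M`. -/
def IsEig {q : Type*} [Fintype q] [DecidableEq q] (M : Matrix q q ℂ) (θ : ℂ) : Prop :=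
  (θ • (1 : Matrix q q ℂ) - M).det = 0

/-- PBH condition for a pair of complex matrices: for every `s ∈ ℂ`, the only row
vector `v` with `v (sI - M) = 0` and `v G = 0` is `v = 0`. -/
def PBH {q r : Type*} [Fintype q] [DecidableEq q] [Fintype r]
    (M : Matrix q q ℂ) (G : Matrix q r ℂ) : Prop :=
  ∀ (s : ℂ) (v : q → ℂ), v ᵥ* (s • (1 : Matrix q q ℂ) - M) = 0 → v ᵥ* G = 0 → v = 0

/-- Controllability of a discrete-time linear system `x⁺ = F x + G u`:
every state can be steered to the origin in finitely many steps. -/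
def Controllable {q r : Type*} [Fintype q] [DecidableEq q] [Fintype r]
    (F : Matrix q q ℝ) (G : Matrix q r ℝ) : Prop :=
  ∀ x : q → ℝ, ∃ (k : ℕ) (u : Fin k → r → ℝ),
    (F ^ k) *ᵥ x + ∑ j : Fin k, (F ^ (k - 1 - (j : ℕ))) *ᵥ (G *ᵥ u j) = 0

/-- `𝓑(h) = (∫₀ʰ e^{Aτ} dτ)·B`. -/
noncomputable def sampB {n p : ℕ} (A : Matrix (Fin n) (Fin n) ℝ)
    (B : Matrix (Fin n) (Fin p) ℝ) (h : ℝ) : Matrix (Fin n) (Fin p) ℝ :=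
  intExp A h * B

/-- `𝓗(h) = (∫₀ʰ e^{Aτ} dτ)·H·C`. -/
noncomputable def sampH {n m : ℕ} (A : Matrix (Fin n) (Fin n) ℝ)
    (H : Matrix (Fin n) (Fin m) ℝ) (C : Matrix (Fin m) (Fin n) ℝ) (h : ℝ) :
    Matrix (Fin n) (Fin n) ℝ :=
  intExp A h * H * C

/-- `Φ_s = I_N ⊗ e^{Ah} + W ⊗ 𝓗(h)`. -/
noncomputable def Phis {n m N : ℕ} (A : Matrix (Fin n) (Fin n) ℝ)
    (H : Matrix (Fin n) (Fin m) ℝ) (C : Matrix (Fin m) (Fin n) ℝ)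
    (W : Matrix (Fin N) (Fin N) ℝ) (h : ℝ) :
    Matrix (Fin N × Fin n) (Fin N × Fin n) ℝ :=
  (1 : Matrix (Fin N) (Fin N) ℝ) ⊗ₖ mexp (h • A) + W ⊗ₖ sampH A H C h

/-- `E_λ = e^{Ah} + λ·𝓗(h)` (complexified). -/
noncomputable def Emat {n m : ℕ} (A : Matrix (Fin n) (Fin n) ℝ)
    (H : Matrix (Fin n) (Fin m) ℝ) (C : Matrix (Fin m) (Fin n) ℝ)
    (h : ℝ) (lam : ℂ) : Matrix (Fin n) (Fin n) ℂ :=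
  cpx (mexp (h • A)) + lam • cpx (sampH A H C h)

lemma cpx_mul {N : ℕ} (A B : Matrix (Fin N) (Fin N) ℝ) : cpx (A * B) = cpx A * cpx B := by
  ext i l
  simp [cpx, Matrix.mul_apply]

lemma cpx_pow {N : ℕ} (A : Matrix (Fin N) (Fin N) ℝ) (j : ℕ) : cpx (A ^ j) = cpx A ^ j := by
  induction j with
  | zero => ext i l; simp [cpx, Matrix.one_apply]; split <;> simp
  | succ n ih => rw [pow_succ, pow_succ, cpx_mul, ih]

lemma cpx_vecMul {N : ℕ} (v : Fin N → ℝ) (M : Matrix (Fin N) (Fin N) ℝ) :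
    (fun i => ((v i : ℝ) : ℂ)) ᵥ* cpx M = fun l => (((v ᵥ* M) l : ℝ) : ℂ) := by
  funext l
  simp [Matrix.vecMul, dotProduct, cpx]

lemma key (N : ℕ) (F G : Matrix (Fin N) (Fin N) ℝ)
    (hpbh : ∀ (s : ℂ) (v : Fin N → ℂ),
      v ᵥ* cpx F = s • v → v ᵥ* cpx G = 0 → v = 0) :
    Controllable F G := by
  classical
  -- Step A: complex row vectors annihilating all F^j G are zero
  have stepA : ∀ v : Fin N → ℂ, (∀ j : ℕ, v ᵥ* (cpx F ^ j * cpx G) = 0) → v = 0 := by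
    intro v hv
    by_contra hv0
    let S : Submodule ℂ (Fin N → ℂ) :=
      { carrier := {w | ∀ j : ℕ, w ᵥ* (cpx F ^ j * cpx G) = 0}
        add_mem' := by
          intro a b ha hb j
          rw [Matrix.add_vecMul, ha j, hb j, add_zero]
        zero_mem' := by intro j; simp
        smul_mem' := by
          intro t a ha j
          rw [Matrix.smul_vecMul, ha j, smul_zero] }
    have hmemFS : ∀ w : Fin N → ℂ, w ∈ S → (w ᵥ* cpx F) ∈ S := by
      intro w hw j
      have h1 := hw (j + 1)
      rw [Matrix.vecMul_vecMul, ← Matrix.mul_assoc, ← pow_succ']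
      exact h1
    let φ : Module.End ℂ S :=
      { toFun := fun w => ⟨(w : Fin N → ℂ) ᵥ* cpx F, hmemFS w w.2⟩
        map_add' := by intro a b; ext i; simp [Matrix.add_vecMul]
        map_smul' := by intro t a; ext i; simp [Matrix.smul_vecMul] }
    have : Nontrivial S := by
      refine nontrivial_of_ne ⟨v, hv⟩ 0 ?_
      intro hcon
      exact hv0 (by simpa using congrArg (Subtype.val) hcon)
    obtain ⟨s, hs⟩ := Module.End.exists_eigenvalue φ
    obtain ⟨w, hw⟩ := hs.exists_hasEigenvector
    have hweq : (w : Fin N → ℂ) ᵥ* cpx F = s • (w : Fin N → ℂ) := by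
      have h1 := congrArg Subtype.val hw.apply_eq_smul
      simpa [φ] using h1
    have hwG : (w : Fin N → ℂ) ᵥ* cpx G = 0 := by
      have h2 := w.2 0
      simpa using h2
    have : (w : Fin N → ℂ) = 0 := hpbh s _ hweq hwG
    exact hw.2 (by ext; simp [this])
  -- Step B: real version
  have stepB : ∀ v : Fin N → ℝ, (∀ j : ℕ, v ᵥ* (F ^ j * G) = 0) → v = 0 := by
    intro v hv
    have h2 : (fun i => ((v i : ℝ) : ℂ)) = 0 := by
      apply stepA
      intro j
      rw [← cpx_pow, ← cpx_mul, cpx_vecMul, hv j]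
      funext l; simp
    funext i
    have h3 : ((v i : ℝ) : ℂ) = 0 := congrFun h2 i
    exact_mod_cast h3
  -- the ranges
  set R : ℕ → Submodule ℝ (Fin N → ℝ) :=
    fun j => LinearMap.range (Matrix.mulVecLin (F ^ j * G)) with hR
  -- Step C: the union of ranges spans everything
  have stepC : (⨆ j : ℕ, R j) = ⊤ := by
    by_contra hT
    obtain ⟨f, hf0, hfmap⟩ :=
      Submodule.exists_dual_map_eq_bot_of_lt_top (lt_top_iff_ne_top.mpr hT) inferInstance
    set v : Fin N → ℝ := fun i => f (fun j => if i = j then 1 else 0) with hv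
    have hfx : ∀ x : Fin N → ℝ, f x = ∑ i, x i * v i := by
      intro x
      rw [LinearMap.pi_apply_eq_sum_univ f x]
      simp [hv, smul_eq_mul]
    have hvz : ∀ j : ℕ, v ᵥ* (F ^ j * G) = 0 := by
      intro j
      funext l
      have hmem : (F ^ j * G) *ᵥ (fun i => if l = i then (1:ℝ) else 0) ∈ (⨆ j : ℕ, R j) :=
        le_iSup R j ⟨_, rfl⟩
      have hz : f ((F ^ j * G) *ᵥ (fun i => if l = i then (1:ℝ) else 0)) = 0 := by
        have := hfmap ▸ Submodule.mem_map_of_mem (f := f) hmem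
        simpa using this
      rw [hfx] at hz
      have : (v ᵥ* (F ^ j * G)) l = ∑ i, ((F ^ j * G) *ᵥ (fun i => if l = i then (1:ℝ) else 0)) i * v i := by
        simp [Matrix.vecMul, Matrix.mulVec, dotProduct, mul_comm]
      rw [this, hz]
      rfl
    have : v = 0 := stepB v hvz
    apply hf0
    apply LinearMap.ext
    intro x
    rw [hfx x, this]
    simp
  -- Step D: partial sums
  set P : ℕ → Submodule ℝ (Fin N → ℝ) := fun k => ⨆ j : Fin k, R (j : ℕ) with hP
  have hPmono : Monotone P := by
    intro k k' hk
    exact iSup_le fun j => le_iSup_of_le (⟨j, lt_of_lt_of_le j.2 hk⟩ : Fin k') le_rfl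
  have hPsup : (⨆ k, P k) = ⊤ := by
    rw [← stepC]
    apply le_antisymm
    · exact iSup_le fun k => iSup_le fun j => le_iSup R (j : ℕ)
    · exact iSup_le fun j => le_iSup_of_le (j + 1) (le_iSup_of_le (⟨j, j.lt_succ_self⟩ : Fin (j+1)) le_rfl)
  have hdir : Directed (· ≤ ·) P := hPmono.directed_le
  -- find a single k with P k = ⊤
  have hex : ∀ i : Fin N, ∃ k, (fun j => if i = j then (1:ℝ) else 0) ∈ P k := by
    intro i
    have : (fun j => if i = j then (1:ℝ) else 0) ∈ ⨆ k, P k := by rw [hPsup]; trivial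
    exact (Submodule.mem_iSup_of_directed P hdir).mp this
  choose kk hkk using hex
  set k : ℕ := Finset.univ.sup kk with hk
  have hPk : P k = ⊤ := by
    rw [eq_top_iff]
    intro x _
    have hx : x = ∑ i, x i • (fun j => if i = j then (1:ℝ) else 0) := pi_eq_sum_univ x
    rw [hx]
    apply Submodule.sum_mem
    intro i _
    exact Submodule.smul_mem _ _ (hPmono (Finset.le_sup (Finset.mem_univ i)) (hkk i))
  -- conclude controllability
  intro x
  have hxmem : (F ^ k) *ᵥ x ∈ P k := by rw [hPk]; trivial
  rw [hP, Submodule.mem_iSup_iff_exists_finsupp] at hxmem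
  obtain ⟨g, hg, hgsum⟩ := hxmem
  choose u hu using fun j => hg j
  refine ⟨k, fun j => -(u (Fin.rev j)), ?_⟩
  have hrw : ∀ j : Fin k, (F ^ (k - 1 - (j : ℕ))) *ᵥ (G *ᵥ (-(u (Fin.rev j))))
      = -(g (Fin.rev j)) := by
    intro j
    have hval : ((Fin.rev j : Fin k) : ℕ) = k - 1 - (j : ℕ) := by
      simp [Fin.rev]
      omega
    rw [Matrix.mulVec_neg, Matrix.mulVec_neg, Matrix.mulVec_mulVec, ← hval]
    congr 1
    rw [show (F ^ ((Fin.rev j : Fin k) : ℕ) * G) *ᵥ u (Fin.rev j) = g (Fin.rev j) from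
      hu (Fin.rev j)]
  have hsum : ∑ j : Fin k, (F ^ (k - 1 - (j : ℕ))) *ᵥ (G *ᵥ (-(u (Fin.rev j))))
      = -((F ^ k) *ᵥ x) := by
    rw [Finset.sum_congr rfl (fun j _ => hrw j), Finset.sum_neg_distrib]
    congr 1
    have hrev : ∑ j : Fin k, g (Fin.rev j) = ∑ j : Fin k, g j :=
      Fintype.sum_equiv Fin.revPerm _ _ (fun j => rfl)
    rw [hrev, ← hgsum, Finsupp.sum_fintype]
    intro i
    rfl
  rw [hsum]
  simp

lemma vecMul_smul_mat {N : ℕ} (v : Fin N → ℂ) (t : ℂ) (M : Matrix (Fin N) (Fin N) ℂ) :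
    v ᵥ* (t • M) = t • (v ᵥ* M) := by
  funext l
  simp [Matrix.vecMul, dotProduct, Finset.mul_sum, mul_left_comm]

lemma cpx_one_add_smul {N : ℕ} (t : ℝ) (M : Matrix (Fin N) (Fin N) ℝ) :
    cpx ((1 : Matrix (Fin N) (Fin N) ℝ) + t • M) = 1 + (t : ℂ) • cpx M := by
  ext i l
  simp [cpx, Matrix.one_apply, apply_ite]

lemma cpx_smul {N : ℕ} (t : ℝ) (M : Matrix (Fin N) (Fin N) ℝ) :
    cpx (t • M) = (t : ℂ) • cpx M := by
  ext i l
  simp [cpx]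

theorem stmt14aux
    (N : ℕ) (hN : 0 < N) (h a b c : ℝ) (hh : 0 < h) (ha : a ≠ 0)
    (W : Matrix (Fin N) (Fin N) ℝ)
    (δ : Fin N → ℝ) (hδ : ∀ i, δ i = 0 ∨ δ i = 1)
    (hPBH : ∀ (s : ℂ) (v : Fin N → ℂ),
      v ᵥ* (s • (1 : Matrix (Fin N) (Fin N) ℂ)
        - cpx (a • (1 : Matrix (Fin N) (Fin N) ℝ) + c • W)) = 0 →
      v ᵥ* cpx (b • Matrix.diagonal δ) = 0 → v = 0) :
    Controllable
      (Real.exp (a * h) • (1 : Matrix (Fin N) (Fin N) ℝ) +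
        ((c / a) * (Real.exp (a * h) - 1)) • W)
      (((b / a) * (Real.exp (a * h) - 1)) • Matrix.diagonal δ) := by
  set μ : ℝ := (Real.exp (a * h) - 1) / a with hμ
  have hexp : Real.exp (a * h) ≠ 1 := by
    intro hcon
    have : a * h = 0 := by
      have := Real.exp_eq_one_iff (a * h)
      tauto
    rcases mul_eq_zero.mp this with h1 | h1
    · exact ha h1
    · exact (ne_of_gt hh) h1
  have hμ0 : μ ≠ 0 := div_ne_zero (sub_ne_zero.mpr hexp) ha
  have hμC : (μ : ℂ) ≠ 0 := by exact_mod_cast hμ0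
  set Φ : Matrix (Fin N) (Fin N) ℝ := a • (1 : Matrix (Fin N) (Fin N) ℝ) + c • W with hΦ
  set Ψ : Matrix (Fin N) (Fin N) ℝ := b • Matrix.diagonal δ with hΨ
  have hFid : Real.exp (a * h) • (1 : Matrix (Fin N) (Fin N) ℝ) +
      ((c / a) * (Real.exp (a * h) - 1)) • W = 1 + μ • Φ := by
    ext i l
    by_cases hil : i = l <;>
      simp [hΦ, Matrix.one_apply, hil, hμ, Matrix.add_apply, Matrix.smul_apply] <;>
      field_simp <;> ring
  have hGid : ((b / a) * (Real.exp (a * h) - 1)) • Matrix.diagonal δ = μ • Ψ := by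
    have hc : (b / a) * (Real.exp (a * h) - 1) = μ * b := by
      rw [hμ]; field_simp
    rw [hc, hΨ, mul_smul]
  rw [hFid, hGid]
  apply key
  intro s v hF hG
  rw [cpx_one_add_smul, Matrix.vecMul_add, Matrix.vecMul_one, vecMul_smul_mat] at hF
  rw [cpx_smul, vecMul_smul_mat, smul_eq_zero] at hG
  have hGz : v ᵥ* cpx Ψ = 0 := by tauto
  have hFz : v ᵥ* cpx Φ = ((s - 1) / (μ : ℂ)) • v := by
    have h1 : (μ : ℂ) • (v ᵥ* cpx Φ) = (s - 1) • v := by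
      rw [sub_smul, one_smul, eq_sub_iff_add_eq']
      exact hF
    calc v ᵥ* cpx Φ = ((μ:ℂ)⁻¹ * (μ:ℂ)) • (v ᵥ* cpx Φ) := by
          rw [inv_mul_cancel₀ hμC, one_smul]
      _ = (μ:ℂ)⁻¹ • ((μ:ℂ) • (v ᵥ* cpx Φ)) := by rw [mul_smul]
      _ = (μ:ℂ)⁻¹ • ((s - 1) • v) := by rw [h1]
      _ = ((s - 1) / (μ:ℂ)) • v := by rw [smul_smul, div_eq_mul_inv, mul_comm]
  apply hPBH ((s - 1) / (μ : ℂ)) v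
  · rw [Matrix.vecMul_sub, vecMul_smul_mat, Matrix.vecMul_one, hFz, sub_self]
  · exact hGz

theorem stmt14
    (N : ℕ) (hN : 0 < N) (h a b c : ℝ) (hh : 0 < h) (ha : a ≠ 0)
    (W : Matrix (Fin N) (Fin N) ℝ)
    (δ : Fin N → ℝ) (hδ : ∀ i, δ i = 0 ∨ δ i = 1)
    (hPBH : PBH (cpx (a • (1 : Matrix (Fin N) (Fin N) ℝ) + c • W))
      (cpx (b • Matrix.diagonal δ))) :
    Controllable
      (Real.exp (a * h) • (1 : Matrix (Fin N) (Fin N) ℝ) +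
        ((c / a) * (Real.exp (a * h) - 1)) • W)
      (((b / a) * (Real.exp (a * h) - 1)) • Matrix.diagonal δ) := by
  exact stmt14aux N hN h a b c hh ha W δ hδ hPBH
end

section
/- Let a, b, c ∈ ℝ with a ≠ 0 and h > 0, and let Φ = a·I_N + c·W, Ψ = b·Δ, Φ_s = e^{ah}·I_N + (c/a)(e^{ah} − 1)·W, Ψ_s = (b/a)(e^{ah} − 1)·Δ. Assume Φ_s is invertible (equivalently, 0 is not an eigenvalue of Φ_s). Then the sampled-data pair (Φ_s, Ψ_s) is controllable if and only if the continuous-time pair (Φ, Ψ) satisfies the PBH condition. -/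
open Matrix
open scoped Kronecker

section StmtAux
open Polynomial

set_option linter.unusedSectionVars false in
private lemma vecMul_sum' {n m : Type*} [Fintype n] {ι : Type*} (s : Finset ι)
    (v : n → ℝ) (M : ι → Matrix n m ℝ) :
    v ᵥ* (∑ i ∈ s, M i) = ∑ i ∈ s, v ᵥ* (M i) := by
  classical
  induction s using Finset.induction_on with
  | empty => simp
  | insert _ _ h ih => simp [Finset.sum_insert h, Matrix.vecMul_add, ih]

private lemma vecMul_smul' {n m : Type*} [Fintype n] (c : ℝ) (v : n → ℝ)
    (M : Matrix n m ℝ) : v ᵥ* (c • M) = c • (v ᵥ* M) := by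
  ext j
  simp [Matrix.vecMul, dotProduct, Finset.mul_sum, mul_left_comm]

private lemma dotProduct_sum' {n : Type*} [Fintype n] {ι : Type*} (s : Finset ι)
    (v : n → ℝ) (w : ι → n → ℝ) :
    v ⬝ᵥ (∑ i ∈ s, w i) = ∑ i ∈ s, v ⬝ᵥ w i := by
  classical
  induction s using Finset.induction_on with
  | empty => simp
  | insert _ _ h ih => simp [Finset.sum_insert h, dotProduct_add, ih]

private lemma vecMul_aeval_mul {n m : Type*} [Fintype n] [DecidableEq n] [Fintype m]
    (F : Matrix n n ℝ) (G : Matrix n m ℝ) (v : n → ℝ)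
    (hv : ∀ i : ℕ, v ᵥ* (F ^ i * G) = 0) (q : ℝ[X]) :
    v ᵥ* (aeval F q * G) = 0 := by
  rw [aeval_eq_sum_range, Matrix.sum_mul, vecMul_sum']
  refine Finset.sum_eq_zero fun i _ => ?_
  rw [Matrix.smul_mul, vecMul_smul', hv, smul_zero]

private lemma exists_aeval_inv {n : Type*} [Fintype n] [DecidableEq n]
    (F : Matrix n n ℝ) (hF : IsUnit F) :
    ∃ q : ℝ[X], F * aeval F q = 1 ∧ aeval F q * F = 1 := by
  have hdet : IsUnit F.det := (Matrix.isUnit_iff_isUnit_det F).1 hF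
  set c0 := F.charpoly.coeff 0 with hc0def
  have hc0 : c0 ≠ 0 := by
    intro h0
    rw [Matrix.det_eq_sign_charpoly_coeff, ← hc0def, h0, mul_zero] at hdet
    exact hdet.ne_zero rfl
  have hkey : F * aeval F F.charpoly.divX = -(c0 • 1) := by
    have h1 : aeval F (X * F.charpoly.divX + C c0) = 0 := by
      rw [X_mul_divX_add]; exact Matrix.aeval_self_charpoly F
    rw [map_add, _root_.map_mul, aeval_X, aeval_C, Algebra.algebraMap_eq_smul_one] at h1
    exact eq_neg_of_add_eq_zero_left h1
  have hcomm : ∀ p : ℝ[X], aeval F p * F = F * aeval F p := by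
    intro p
    have h1 : aeval F (p * X) = aeval F (X * p) := by rw [mul_comm]
    simpa [_root_.map_mul, aeval_X] using h1
  have hmain : F * aeval F ((-c0⁻¹) • F.charpoly.divX) = 1 := by
    rw [_root_.map_smul, Matrix.mul_smul, hkey, smul_neg, neg_smul, neg_neg, smul_smul,
      inv_mul_cancel₀ hc0, one_smul]
  exact ⟨_, hmain, (hcomm _).trans hmain⟩

private lemma vecMul_pow_all {m : Type*} [Fintype m] {N : ℕ}
    (F : Matrix (Fin N) (Fin N) ℝ) (G : Matrix (Fin N) m ℝ)
    (v : Fin N → ℝ) (hv : ∀ i < N, v ᵥ* (F ^ i * G) = 0) :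
    ∀ i, v ᵥ* (F ^ i * G) = 0 := by
  have hdeg : F.charpoly.natDegree = N := by
    rw [Matrix.charpoly_natDegree_eq_dim, Fintype.card_fin]
  have hcN : F.charpoly.coeff N = 1 := by
    have := F.charpoly_monic.coeff_natDegree
    rwa [hdeg] at this
  have hFN : F ^ N = ∑ k ∈ Finset.range N, (-(F.charpoly.coeff k)) • F ^ k := by
    have h1 := Matrix.aeval_self_charpoly F
    rw [aeval_eq_sum_range, hdeg, Finset.sum_range_succ, hcN, one_smul] at h1
    have h2 : F ^ N = -(∑ k ∈ Finset.range N, F.charpoly.coeff k • F ^ k) :=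
      eq_neg_of_add_eq_zero_right h1
    rw [h2, ← Finset.sum_neg_distrib]
    exact Finset.sum_congr rfl fun k _ => (neg_smul _ _).symm
  intro i
  induction i using Nat.strong_induction_on with
  | _ i ih =>
    by_cases hi : i < N
    · exact hv i hi
    · push_neg at hi
      have hpow : F ^ i = F ^ (i - N) * F ^ N := by
        rw [← pow_add, Nat.sub_add_cancel hi]
      rw [hpow, hFN, Finset.mul_sum, Matrix.sum_mul, vecMul_sum']
      refine Finset.sum_eq_zero fun k hk => ?_
      have hk' : k < N := Finset.mem_range.1 hk
      rw [Matrix.mul_smul, Matrix.smul_mul, vecMul_smul', ← pow_add,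
        ih (i - N + k) (by omega), smul_zero]

private lemma eq_zero_of_controllable {n m : Type*} [Fintype n] [DecidableEq n] [Fintype m]
    (F : Matrix n n ℝ) (G : Matrix n m ℝ)
    (hF : IsUnit F) (hc : Controllable F G) (v : n → ℝ)
    (hv : ∀ i : ℕ, v ᵥ* (F ^ i * G) = 0) : v = 0 := by
  obtain ⟨q, hq1, hq2⟩ := exists_aeval_inv F hF
  set R := aeval F q with hR
  have hRk : ∀ k : ℕ, R ^ k * F ^ k = 1 := by
    intro k
    have hcomm : Commute R F := by unfold Commute SemiconjBy; rw [hq2, hq1]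
    rw [← hcomm.mul_pow, hq2, one_pow]
  have key : ∀ x : n → ℝ, v ⬝ᵥ x = 0 := by
    intro x
    obtain ⟨k, u, hu⟩ := hc x
    have h2 : F ^ k *ᵥ x = -(∑ j : Fin k, (F ^ (k - 1 - (j : ℕ))) *ᵥ (G *ᵥ u j)) :=
      eq_neg_of_add_eq_zero_left hu
    have hx : x = R ^ k *ᵥ (F ^ k *ᵥ x) := by
      rw [Matrix.mulVec_mulVec, hRk, Matrix.one_mulVec]
    rw [hx, Matrix.dotProduct_mulVec, h2, dotProduct_neg, dotProduct_sum']
    rw [neg_eq_zero]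
    refine Finset.sum_eq_zero fun j _ => ?_
    rw [Matrix.dotProduct_mulVec, Matrix.dotProduct_mulVec, Matrix.vecMul_vecMul,
      Matrix.vecMul_vecMul]
    have hz : v ᵥ* (R ^ k * F ^ (k - 1 - (j : ℕ)) * G) = 0 := by
      have := vecMul_aeval_mul F G v hv (q ^ k * X ^ (k - 1 - (j : ℕ)))
      rwa [_root_.map_mul, map_pow, map_pow, aeval_X, ← hR] at this
    rw [← Matrix.mul_assoc, hz, zero_dotProduct]
  ext j
  have := key (Pi.single j 1)
  simpa [dotProduct_single] using this

private lemma controllable_of_u {N : ℕ} {m : Type*} [Fintype m]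
    (F : Matrix (Fin N) (Fin N) ℝ) (G : Matrix (Fin N) m ℝ)
    (hv : ∀ v : Fin N → ℝ, (∀ i < N, v ᵥ* (F ^ i * G) = 0) → v = 0) :
    Controllable F G := by
  classical
  set K : Matrix (Fin N) (Fin N × m) ℝ :=
    Matrix.of (fun i q => (F ^ (q.1 : ℕ) * G) i q.2) with hK
  have hinj : Function.Injective (Matrix.mulVecLin Kᵀ) := by
    rw [← LinearMap.ker_eq_bot]
    refine (Submodule.eq_bot_iff _).2 fun w hw => ?_
    rw [LinearMap.mem_ker] at hw
    refine hv w fun i hi => ?_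
    ext j
    have := congrFun hw (⟨i, hi⟩, j)
    simpa [hK, Matrix.mulVecLin_apply, Matrix.mulVec_transpose, Matrix.vecMul,
      dotProduct] using this
  have hrankT : (Kᵀ).rank = N := by
    rw [Matrix.rank, LinearMap.finrank_range_of_inj hinj, Module.finrank_fin_fun]
  have hrank : K.rank = N := by rw [← Matrix.rank_transpose, hrankT]
  have hsurj : Function.Surjective (Matrix.mulVecLin K) := by
    rw [← LinearMap.range_eq_top]
    apply Submodule.eq_top_of_finrank_eq
    rw [show Module.finrank ℝ ↥(LinearMap.range K.mulVecLin) = K.rank from rfl, hrank,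
      Module.finrank_fin_fun]
  intro x
  obtain ⟨u', hu'⟩ := hsurj (-(F ^ N *ᵥ x))
  refine ⟨N, fun j t => u' (j.rev, t), ?_⟩
  have hKmul : Matrix.mulVecLin K u'
      = ∑ k : Fin N, (F ^ (k : ℕ) * G) *ᵥ (fun t => u' (k, t)) := by
    ext i
    simp [hK, Matrix.mulVecLin_apply, Matrix.mulVec, dotProduct, Fintype.sum_prod_type,
      Finset.sum_apply]
  have hre : ∑ j : Fin N, F ^ (N - 1 - (j : ℕ)) *ᵥ (G *ᵥ (fun t => u' (j.rev, t)))
      = ∑ k : Fin N, (F ^ (k : ℕ) * G) *ᵥ (fun t => u' (k, t)) := by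
    rw [← Equiv.sum_comp (Fin.revPerm)
      (fun k : Fin N => (F ^ (k : ℕ) * G) *ᵥ (fun t => u' (k, t)))]
    refine Finset.sum_congr rfl fun j _ => ?_
    have h1 : N - 1 - (j : ℕ) = ((Fin.revPerm j : Fin N) : ℕ) := by
      simp only [Fin.revPerm_apply, Fin.val_rev]
      omega
    rw [Matrix.mulVec_mulVec, h1]
    rfl
  rw [hre, ← hKmul, hu', add_neg_cancel]

private lemma cpx_mul_s15 {n p m : Type*} [Fintype p] (A : Matrix n p ℝ) (B : Matrix p m ℝ) :
    cpx (A * B) = cpx A * cpx B := by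
  ext i j
  simp [cpx, Matrix.mul_apply]

private lemma cpx_one {n : Type*} [Fintype n] [DecidableEq n] :
    cpx (1 : Matrix n n ℝ) = 1 := by
  ext i j
  simp [cpx, Matrix.one_apply]
  split <;> simp

private lemma cpx_pow_s15 {n : Type*} [Fintype n] [DecidableEq n] (A : Matrix n n ℝ) (i : ℕ) :
    cpx (A ^ i) = (cpx A) ^ i := by
  induction i with
  | zero => simpa using cpx_one
  | succ k ih => rw [pow_succ, pow_succ, cpx_mul_s15, ih]

private lemma cpx_add {n m : Type*} (A B : Matrix n m ℝ) : cpx (A + B) = cpx A + cpx B := by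
  ext i j; simp [cpx]

private lemma cpx_smul_s15 {n m : Type*} (r : ℝ) (A : Matrix n m ℝ) :
    cpx (r • A) = (r : ℂ) • cpx A := by
  ext i j; simp [cpx]

private lemma vecMul_cpx {n m : Type*} [Fintype n] (v : n → ℝ) (M : Matrix n m ℝ) :
    (fun i => ((v i : ℂ))) ᵥ* cpx M = fun j => ((v ᵥ* M) j : ℂ) := by
  ext j
  simp [Matrix.vecMul, dotProduct, cpx]

private lemma re_vecMul_cpx {n m : Type*} [Fintype n] (v : n → ℂ) (M : Matrix n m ℝ) (j : m) :
    ((fun i => (v i).re) ᵥ* M) j = ((v ᵥ* cpx M) j).re := by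
  simp [Matrix.vecMul, dotProduct, cpx, Complex.re_sum]

private lemma im_vecMul_cpx {n m : Type*} [Fintype n] (v : n → ℂ) (M : Matrix n m ℝ) (j : m) :
    ((fun i => (v i).im) ᵥ* M) j = ((v ᵥ* cpx M) j).im := by
  simp [Matrix.vecMul, dotProduct, cpx, Complex.im_sum]

private lemma vecMul_smulM {n m : Type*} [Fintype n] (c : ℂ) (v : n → ℂ) (M : Matrix n m ℂ) :
    v ᵥ* (c • M) = c • (v ᵥ* M) := by
  ext j
  simp [Matrix.vecMul, dotProduct, Finset.mul_sum, mul_left_comm]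

private lemma pbh_iff_uC {n m : Type*} [Fintype n] [DecidableEq n] [Fintype m]
    (Fc : Matrix n n ℂ) (Gc : Matrix n m ℂ) :
    PBH Fc Gc ↔ ∀ v : n → ℂ, (∀ i : ℕ, v ᵥ* (Fc ^ i * Gc) = 0) → v = 0 := by
  constructor
  · intro hp v hv
    by_contra hv0
    set U : Submodule ℂ (n → ℂ) :=
      ⨅ i : ℕ, LinearMap.ker (Matrix.mulVecLin (Fc ^ i * Gc)ᵀ) with hU
    have memU : ∀ w : n → ℂ, w ∈ U ↔ ∀ i : ℕ, w ᵥ* (Fc ^ i * Gc) = 0 := by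
      intro w
      simp only [hU, Submodule.mem_iInf, LinearMap.mem_ker, Matrix.mulVecLin_apply,
        Matrix.mulVec_transpose]
    have hvU : v ∈ U := (memU v).2 hv
    have hstab : ∀ w ∈ U, Matrix.mulVecLin Fcᵀ w ∈ U := by
      intro w hw
      rw [memU] at hw ⊢
      intro i
      have h1 : Matrix.mulVecLin Fcᵀ w = w ᵥ* Fc := by
        simp [Matrix.mulVecLin_apply, Matrix.mulVec_transpose]
      rw [h1, Matrix.vecMul_vecMul, ← Matrix.mul_assoc, ← pow_succ']
      exact hw (i + 1)
    haveI : Nontrivial U := ⟨⟨⟨v, hvU⟩, 0, by simpa [Subtype.ext_iff] using hv0⟩⟩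
    obtain ⟨s, hs⟩ := Module.End.exists_eigenvalue
      ((Matrix.mulVecLin Fcᵀ).restrict hstab)
    obtain ⟨w, hw⟩ := hs.exists_hasEigenvector
    have hwF : (w : n → ℂ) ᵥ* Fc = s • (w : n → ℂ) := by
      have h1 := congrArg Subtype.val hw.apply_eq_smul
      simp only [LinearMap.restrict_apply, Matrix.mulVecLin_apply] at h1
      rw [Matrix.mulVec_transpose] at h1
      exact h1
    have hwG : (w : n → ℂ) ᵥ* Gc = 0 := by
      have := (memU _).1 w.2 0
      simpa using this
    have hw1 : (w : n → ℂ) ᵥ* (s • (1 : Matrix n n ℂ) - Fc) = 0 := by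
      rw [Matrix.vecMul_sub, vecMul_smulM, Matrix.vecMul_one, hwF, sub_self]
    have := hp s w hw1 hwG
    exact hw.2 (Subtype.ext this)
  · intro hu s v h1 h2
    have hvF : v ᵥ* Fc = s • v := by
      rw [Matrix.vecMul_sub, vecMul_smulM, Matrix.vecMul_one] at h1
      exact (sub_eq_zero.1 h1).symm
    refine hu v fun i => ?_
    induction i with
    | zero => simpa using h2
    | succ k ih =>
      rw [pow_succ', Matrix.mul_assoc, ← Matrix.vecMul_vecMul, hvF,
        Matrix.smul_vecMul, ih, smul_zero]

private lemma ctrl_iff_pbh {N : ℕ} {m : Type*} [Fintype m]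
    (F : Matrix (Fin N) (Fin N) ℝ) (G : Matrix (Fin N) m ℝ) (hF : IsUnit F) :
    Controllable F G ↔ PBH (cpx F) (cpx G) := by
  rw [pbh_iff_uC]
  constructor
  · intro hc v hv
    have hv' : ∀ i : ℕ, v ᵥ* cpx (F ^ i * G) = 0 := by
      intro i
      rw [cpx_mul_s15, cpx_pow_s15]
      exact hv i
    have hre : (fun i => (v i).re) = 0 := by
      refine eq_zero_of_controllable F G hF hc _ fun i => ?_
      ext j
      rw [re_vecMul_cpx, hv' i]
      simp
    have him : (fun i => (v i).im) = 0 := by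
      refine eq_zero_of_controllable F G hF hc _ fun i => ?_
      ext j
      rw [im_vecMul_cpx, hv' i]
      simp
    funext i
    exact Complex.ext (by simpa using congrFun hre i) (by simpa using congrFun him i)
  · intro hu
    apply controllable_of_u
    intro v hvlt
    have hall := vecMul_pow_all F G v hvlt
    have hz : (fun i => ((v i : ℂ))) = 0 := by
      refine hu _ fun i => ?_
      rw [← cpx_pow_s15, ← cpx_mul_s15, vecMul_cpx]
      funext j
      rw [hall i]
      simp
    funext i
    have h0 := congrFun hz i
    rw [Pi.zero_apply] at h0
    exact_mod_cast h0

private lemma pbh_affine {n : Type*} [Fintype n] [DecidableEq n] {m : Type*} [Fintype m]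
    (P : Matrix n n ℂ) (Q : Matrix n m ℂ) (mu : ℂ) (hmu : mu ≠ 0) :
    PBH (1 + mu • P) (mu • Q) ↔ PBH P Q := by
  constructor
  · intro hp s v h1 h2
    refine hp (1 + mu * s) v ?_ ?_
    · have key : (1 + mu * s) • (1 : Matrix n n ℂ) - (1 + mu • P)
          = mu • (s • (1 : Matrix n n ℂ) - P) := by
        match_scalars <;> ring
      rw [key, vecMul_smulM, h1, smul_zero]
    · rw [vecMul_smulM, h2, smul_zero]
  · intro hp s v h1 h2
    refine hp ((s - 1) / mu) v ?_ ?_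
    · have key : s • (1 : Matrix n n ℂ) - (1 + mu • P)
          = mu • (((s - 1) / mu) • (1 : Matrix n n ℂ) - P) := by
        match_scalars
        · field_simp
        · ring
      rw [key, vecMul_smulM] at h1
      exact (smul_eq_zero.1 h1).resolve_left hmu
    · rw [vecMul_smulM] at h2
      exact (smul_eq_zero.1 h2).resolve_left hmu

end StmtAux

theorem stmt15
    (N : ℕ) (hN : 0 < N) (h a b c : ℝ) (hh : 0 < h) (ha : a ≠ 0)
    (W : Matrix (Fin N) (Fin N) ℝ)
    (δ : Fin N → ℝ) (hδ : ∀ i, δ i = 0 ∨ δ i = 1)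
    (hinv : IsUnit (Real.exp (a * h) • (1 : Matrix (Fin N) (Fin N) ℝ) +
      ((c / a) * (Real.exp (a * h) - 1)) • W)) :
    Controllable
      (Real.exp (a * h) • (1 : Matrix (Fin N) (Fin N) ℝ) +
        ((c / a) * (Real.exp (a * h) - 1)) • W)
      (((b / a) * (Real.exp (a * h) - 1)) • Matrix.diagonal δ) ↔
      PBH (cpx (a • (1 : Matrix (Fin N) (Fin N) ℝ) + c • W))
        (cpx (b • Matrix.diagonal δ)) := by
  have hexp : Real.exp (a * h) - 1 ≠ 0 := by
    rw [sub_ne_zero]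
    intro h1
    exact (mul_ne_zero ha (ne_of_gt hh)) ((Real.exp_eq_one_iff _).1 h1)
  have hmu : (Real.exp (a * h) - 1) / a ≠ 0 := div_ne_zero hexp ha
  have hFeq : Real.exp (a * h) • (1 : Matrix (Fin N) (Fin N) ℝ) +
      ((c / a) * (Real.exp (a * h) - 1)) • W
      = 1 + ((Real.exp (a * h) - 1) / a) • (a • (1 : Matrix (Fin N) (Fin N) ℝ) + c • W) := by
    match_scalars <;> field_simp <;> ring
  have hGeq : (((b / a) * (Real.exp (a * h) - 1)) • Matrix.diagonal δ)
      = ((Real.exp (a * h) - 1) / a) • (b • Matrix.diagonal δ) := by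
    rw [smul_smul]
    congr 1
    field_simp
  rw [hFeq, hGeq, ctrl_iff_pbh _ _ (hFeq ▸ hinv), cpx_add, cpx_one, cpx_smul_s15, cpx_smul_s15]
  exact pbh_affine _ _ _ (by exact_mod_cast hmu)
end

section
/- Consider the networked system with self-loop node dynamics A = I_n: let Φ = I_{Nn} + W ⊗ (H·C), Ψ = Δ ⊗ B, and the sampled-data system Φ_s = e^{h}·I_{Nn} + (e^{h} − 1)·W ⊗ (H·C), Ψ_s = (e^{h} − 1)·Δ ⊗ B, where h > 0. Assume Φ_s is invertible (equivalently, 0 is not an eigenvalue of Φ_s). Then the sampled-data pair (Φ_s, Ψ_s) is controllable if and only if the continuous-time pair (Φ, Ψ) satisfies the PBH condition. -/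
open Matrix
open scoped Kronecker

set_option linter.unusedSectionVars false
set_option maxHeartbeats 1000000

def cv {a : Type*} (x : a → ℝ) : a → ℂ := fun j => (x j : ℂ)

section Helpers

variable {q r : Type*} [Fintype q] [DecidableEq q] [Fintype r] [DecidableEq r]

lemma cv_add {a : Type*} (x y : a → ℝ) : cv (x + y) = cv x + cv y := by
  ext j; simp [cv]

lemma cv_zero {a : Type*} : cv (0 : a → ℝ) = 0 := by ext j; simp [cv]

lemma cv_sum {a b : Type*} (s : Finset b) (f : b → a → ℝ) :
    cv (∑ j ∈ s, f j) = ∑ j ∈ s, cv (f j) := by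
  ext i; simp [cv]

lemma cv_eq_zero {a : Type*} {x : a → ℝ} (h : cv x = 0) : x = 0 := by
  ext j; have := congrFun h j; simpa [cv] using this

lemma cpx_mul_s17 {a b c : Type*} [Fintype b] (M : Matrix a b ℝ) (N : Matrix b c ℝ) :
    cpx (M * N) = cpx M * cpx N :=
  Matrix.map_mul (f := Complex.ofRealHom)

lemma cpx_one_s17 : cpx (1 : Matrix q q ℝ) = 1 :=
  Matrix.map_one _ (map_zero Complex.ofRealHom) (map_one Complex.ofRealHom)

lemma cpx_pow_s17 (M : Matrix q q ℝ) (k : ℕ) : cpx (M ^ k) = cpx M ^ k := by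
  induction k with
  | zero => simpa using cpx_one_s17
  | succ k ih => rw [pow_succ, pow_succ, cpx_mul_s17, ih]

lemma cpx_add_s17 {a b : Type*} (M N : Matrix a b ℝ) : cpx (M + N) = cpx M + cpx N := by
  ext i j; simp [cpx]

lemma cpx_smul_s17 {a b : Type*} (c : ℝ) (M : Matrix a b ℝ) :
    cpx (c • M) = (c : ℂ) • cpx M := by
  ext i j; simp [cpx]

lemma cpx_mulVec {a b : Type*} [Fintype b] (M : Matrix a b ℝ) (x : b → ℝ) :
    cpx M *ᵥ cv x = cv (M *ᵥ x) := by
  ext i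
  simp [Matrix.mulVec, dotProduct, cpx, cv]

lemma cpx_vecMul_s17 {a b : Type*} [Fintype a] (M : Matrix a b ℝ) (v : a → ℝ) :
    cv v ᵥ* cpx M = cv (v ᵥ* M) := by
  ext i
  simp [Matrix.vecMul, dotProduct, cpx, cv]

lemma cpx_isUnit (M : Matrix q q ℝ) (h : IsUnit M) : IsUnit (cpx M) := by
  have := h.map (RingHom.mapMatrix (Complex.ofRealHom)).toMonoidHom
  exact this

lemma dotP_sum {a b : Type*} [Fintype a] (v : a → ℂ) (s : Finset b) (f : b → a → ℂ) :
    v ⬝ᵥ (∑ j ∈ s, f j) = ∑ j ∈ s, v ⬝ᵥ f j := by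
  simp only [dotProduct, Finset.sum_apply, Finset.mul_sum]
  rw [Finset.sum_comm]

lemma vecMul_pow_eq {v : q → ℂ} {M : Matrix q q ℂ} {s : ℂ}
    (hv : v ᵥ* M = s • v) (k : ℕ) : v ᵥ* (M ^ k) = s ^ k • v := by
  induction k with
  | zero => simp
  | succ k ih =>
    rw [pow_succ, ← Matrix.vecMul_vecMul, ih, Matrix.smul_vecMul, hv, smul_smul, pow_succ]

lemma vecMul_smulMat {a b : Type*} [Fintype a] (c : ℂ) (M : Matrix a b ℂ) (v : a → ℂ) :
    v ᵥ* (c • M) = c • (v ᵥ* M) := by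
  ext j
  simp [Matrix.vecMul, dotProduct, Finset.mul_sum, mul_left_comm]

/-- Direction: controllable + invertible ⟹ eigenvector-form PBH for (F,G). -/
lemma ctrb_to_pbh (F : Matrix q q ℝ) (G : Matrix q r ℝ)
    (hF : IsUnit (cpx F)) (hc : Controllable F G)
    (s : ℂ) (v : q → ℂ) (h1 : v ᵥ* cpx F = s • v) (h2 : v ᵥ* cpx G = 0) : v = 0 := by
  by_contra hv
  obtain ⟨i, hi⟩ : ∃ i, v i ≠ 0 := by
    by_contra hall; push_neg at hall; exact hv (funext hall)
  obtain ⟨k, u, hu⟩ := hc (Pi.single i 1)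
  have key : s ^ k * v i = 0 := by
    have hcv : cv ((F ^ k) *ᵥ Pi.single i 1)
        + ∑ j : Fin k, cv ((F ^ (k - 1 - (j : ℕ))) *ᵥ (G *ᵥ u j)) = 0 := by
      rw [← cv_sum, ← cv_add, hu, cv_zero]
    have hd := congrArg (fun w => v ⬝ᵥ w) hcv
    simp only [dotProduct_add, dotP_sum] at hd
    have t1 : v ⬝ᵥ cv ((F ^ k) *ᵥ Pi.single i 1) = s ^ k * v i := by
      rw [← cpx_mulVec, Matrix.dotProduct_mulVec, cpx_pow_s17, vecMul_pow_eq h1,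
        smul_dotProduct]
      have : v ⬝ᵥ cv (Pi.single i 1) = v i := by
        simp [cv, dotProduct, Pi.single_apply, apply_ite Complex.ofReal]
      rw [this]; simp
    have t2 : ∀ j : Fin k, v ⬝ᵥ cv ((F ^ (k - 1 - (j : ℕ))) *ᵥ (G *ᵥ u j)) = 0 := by
      intro j
      rw [← cpx_mulVec, Matrix.dotProduct_mulVec, cpx_pow_s17, vecMul_pow_eq h1,
        smul_dotProduct, ← cpx_mulVec, Matrix.dotProduct_mulVec, h2,
        zero_dotProduct, smul_zero]
    rw [t1, Finset.sum_congr rfl (fun j _ => t2 j), Finset.sum_const_zero, add_zero] at hd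
    simpa using hd
  have hk : k ≠ 0 := by
    intro h; rw [h] at key; simp at key; exact hi key
  have hs : s = 0 := by
    rcases mul_eq_zero.mp key with h | h
    · exact (pow_eq_zero_iff hk).mp h
    · exact absurd h hi
  rw [hs, zero_smul] at h1
  obtain ⟨U, hU⟩ := hF
  have hB : cpx F * ((U⁻¹ : (Matrix q q ℂ)ˣ) : Matrix q q ℂ) = 1 := by
    rw [← hU]; exact U.mul_inv
  have : v = 0 := by
    calc v = v ᵥ* (1 : Matrix q q ℂ) := (Matrix.vecMul_one v).symm
    _ = v ᵥ* (cpx F * ((U⁻¹ : (Matrix q q ℂ)ˣ) : Matrix q q ℂ)) := by rw [hB]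
    _ = (v ᵥ* cpx F) ᵥ* ((U⁻¹ : (Matrix q q ℂ)ˣ) : Matrix q q ℂ) :=
        (Matrix.vecMul_vecMul _ _ _).symm
    _ = 0 := by rw [h1, Matrix.zero_vecMul]
  exact hv this

/-- The controllability-to-step-`k` linear map. -/
noncomputable def Lmap (F : Matrix q q ℝ) (G : Matrix q r ℝ) (k : ℕ) :
    (Fin k → r → ℝ) →ₗ[ℝ] (q → ℝ) :=
  ∑ j : Fin k, ((F ^ (k - 1 - (j : ℕ)) * G).mulVecLin).comp (LinearMap.proj j)

lemma Lmap_apply (F : Matrix q q ℝ) (G : Matrix q r ℝ) (k : ℕ) (u : Fin k → r → ℝ) :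
    Lmap F G k u = ∑ j : Fin k, (F ^ (k - 1 - (j : ℕ)) * G) *ᵥ u j := by
  simp [Lmap]

lemma Lmap_mono (F : Matrix q q ℝ) (G : Matrix q r ℝ) (k : ℕ) :
    LinearMap.range (Lmap F G k) ≤ LinearMap.range (Lmap F G (k + 1)) := by
  rintro y ⟨u, rfl⟩
  refine ⟨Fin.cases 0 u, ?_⟩
  rw [Lmap_apply, Lmap_apply, Fin.sum_univ_succ]
  simp only [Fin.cases_zero, Fin.cases_succ, Matrix.mulVec_zero, zero_add]
  refine Finset.sum_congr rfl fun j _ => ?_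
  have he : k + 1 - 1 - ((j.succ : Fin (k + 1)) : ℕ) = k - 1 - (j : ℕ) := by
    rw [Fin.val_succ]; omega
  rw [he]

lemma single_le_Lmap (F : Matrix q q ℝ) (G : Matrix q r ℝ) (i : ℕ) :
    LinearMap.range ((F ^ i * G).mulVecLin) ≤ LinearMap.range (Lmap F G (i + 1)) := by
  rintro y ⟨u, rfl⟩
  refine ⟨Fin.cases u 0, ?_⟩
  rw [Lmap_apply, Fin.sum_univ_succ]
  simp

/-- Direction: eigenvector-form PBH for (F,G) ⟹ controllable. -/
lemma pbh_to_ctrb (F : Matrix q q ℝ) (G : Matrix q r ℝ)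
    (hp : ∀ (s : ℂ) (v : q → ℂ), v ᵥ* cpx F = s • v → v ᵥ* cpx G = 0 → v = 0) :
    Controllable F G := by
  have Rmono : Monotone fun k => LinearMap.range (Lmap F G k) :=
    monotone_nat_of_le_succ (Lmap_mono F G)
  set R : ℕ →o Submodule ℝ (q → ℝ) := ⟨fun k => LinearMap.range (Lmap F G k), Rmono⟩ with hR
  obtain ⟨n, hn⟩ := monotone_stabilizes_iff_noetherian.mpr inferInstance R
  have htop : LinearMap.range (Lmap F G n) = ⊤ := by
    by_contra hne
    obtain ⟨f, hf0, hfbot⟩ := Submodule.exists_dual_map_eq_bot_of_lt_top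
      (lt_top_iff_ne_top.mpr hne) inferInstance
    have hker : ∀ y ∈ LinearMap.range (Lmap F G n), f y = 0 := by
      intro y hy
      have : f y ∈ Submodule.map f (LinearMap.range (Lmap F G n)) :=
        Submodule.mem_map_of_mem hy
      rw [hfbot] at this; simpa using this
    set vr : q → ℝ := fun i => f (Pi.single i 1) with hvr
    have hsingle : ∀ i : q, (fun j => if i = j then (1:ℝ) else 0) = Pi.single i 1 := by
      intro i; ext j; simp [Pi.single_apply, eq_comm]
    have hfy : ∀ y, f y = vr ⬝ᵥ y := by
      intro y
      rw [LinearMap.pi_apply_eq_sum_univ f y]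
      simp only [hsingle]
      simp [dotProduct, hvr, mul_comm]
    have hvr0 : vr ≠ 0 := by
      intro h
      exact hf0 (LinearMap.ext fun y => by rw [hfy, h]; simp)
    have hann : ∀ i : ℕ, vr ᵥ* (F ^ i * G) = 0 := by
      intro i
      have hdall : ∀ u : r → ℝ, (vr ᵥ* (F ^ i * G)) ⬝ᵥ u = 0 := by
        intro u
        have hmem : (F ^ i * G) *ᵥ u ∈ LinearMap.range (Lmap F G n) := by
          have h1 : (F ^ i * G) *ᵥ u ∈ LinearMap.range (Lmap F G (i + 1)) :=
            single_le_Lmap F G i ⟨u, by simp⟩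
          have h2 : R (i + 1) ≤ R (max n (i + 1)) := R.monotone (le_max_right _ _)
          have h3 : R n = R (max n (i + 1)) := hn _ (le_max_left _ _)
          have : (F ^ i * G) *ᵥ u ∈ R (max n (i + 1)) := h2 h1
          rw [← h3] at this
          exact this
        have := hker _ hmem
        rw [hfy, Matrix.dotProduct_mulVec] at this
        exact this
      ext j
      have := hdall (Pi.single j 1)
      simpa [dotProduct, Pi.single_apply] using this
    set V : Submodule ℂ (q → ℂ) :=
      ⨅ i : ℕ, LinearMap.ker ((cpx F ^ i * cpx G).vecMulLinear) with hV
    have hmemV : ∀ x : q → ℂ, x ∈ V ↔ ∀ i : ℕ, x ᵥ* (cpx F ^ i * cpx G) = 0 := by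
      intro x
      simp [hV, Submodule.mem_iInf, LinearMap.mem_ker]
    have hwV : cv vr ∈ V := by
      rw [hmemV]
      intro i
      rw [← cpx_pow_s17, ← cpx_mul_s17, cpx_vecMul_s17, hann i, cv_zero]
    have hVne : V ≠ ⊥ := by
      intro h
      rw [h, Submodule.mem_bot] at hwV
      exact hvr0 (cv_eq_zero hwV)
    have hmaps : ∀ x ∈ V, (cpx F).vecMulLinear x ∈ V := by
      intro x hx
      rw [hmemV] at hx ⊢
      intro i
      rw [Matrix.vecMulLinear_apply, Matrix.vecMul_vecMul, ← Matrix.mul_assoc,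
        ← pow_succ']
      exact hx (i + 1)
    set T : Module.End ℂ V := ((cpx F).vecMulLinear).restrict hmaps with hT
    haveI : Nontrivial V := Submodule.nontrivial_iff_ne_bot.mpr hVne
    obtain ⟨c, hc⟩ := Module.End.exists_eigenvalue T
    obtain ⟨w, hw⟩ := hc.exists_hasEigenvector
    have hveq : (w : q → ℂ) ᵥ* cpx F = c • (w : q → ℂ) := by
      have h1 := hw.apply_eq_smul
      have h2 := congrArg (Subtype.val) h1
      simpa [hT, LinearMap.restrict_apply] using h2
    have hG0 : (w : q → ℂ) ᵥ* cpx G = 0 := by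
      have := (hmemV _).mp w.2 0
      simpa using this
    have : (w : q → ℂ) = 0 := hp c _ hveq hG0
    exact hw.right (Subtype.ext this)
  intro x
  refine ⟨n, ?_⟩
  have : -((F ^ n) *ᵥ x) ∈ LinearMap.range (Lmap F G n) := htop ▸ Submodule.mem_top
  obtain ⟨u, hu⟩ := this
  refine ⟨u, ?_⟩
  rw [Lmap_apply] at hu
  have : ∑ j : Fin n, (F ^ (n - 1 - (j : ℕ))) *ᵥ (G *ᵥ u j) = -((F ^ n) *ᵥ x) := by
    rw [← hu]
    exact Finset.sum_congr rfl fun j _ => Matrix.mulVec_mulVec _ _ _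
  rw [this, add_neg_cancel]

end Helpers

theorem stmt17
    (n m p N : ℕ) (hn : 0 < n) (hm : 0 < m) (hp : 0 < p) (hN : 0 < N)
    (h : ℝ) (hh : 0 < h)
    (B : Matrix (Fin n) (Fin p) ℝ) (C : Matrix (Fin m) (Fin n) ℝ)
    (H : Matrix (Fin n) (Fin m) ℝ) (W : Matrix (Fin N) (Fin N) ℝ)
    (δ : Fin N → ℝ) (hδ : ∀ i, δ i = 0 ∨ δ i = 1)
    (hinv : IsUnit (Real.exp h • (1 : Matrix (Fin N × Fin n) (Fin N × Fin n) ℝ) +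
      (Real.exp h - 1) • (W ⊗ₖ (H * C)))) :
    Controllable
      (Real.exp h • (1 : Matrix (Fin N × Fin n) (Fin N × Fin n) ℝ) +
        (Real.exp h - 1) • (W ⊗ₖ (H * C)))
      ((Real.exp h - 1) • (Matrix.diagonal δ ⊗ₖ B)) ↔
      PBH (cpx ((1 : Matrix (Fin N × Fin n) (Fin N × Fin n) ℝ) + W ⊗ₖ (H * C)))
        (cpx (Matrix.diagonal δ ⊗ₖ B)) := by
  set K : Matrix (Fin N × Fin n) (Fin N × Fin n) ℝ := W ⊗ₖ (H * C) with hK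
  set Ψ : Matrix (Fin N × Fin n) (Fin N × Fin p) ℝ := Matrix.diagonal δ ⊗ₖ B with hΨ
  set e : ℝ := Real.exp h with he
  set a : ℝ := Real.exp h - 1 with ha
  set F : Matrix (Fin N × Fin n) (Fin N × Fin n) ℝ := e • 1 + a • K with hF
  set G : Matrix (Fin N × Fin n) (Fin N × Fin p) ℝ := a • Ψ with hG
  have hexp : (1 : ℝ) < Real.exp h := by
    calc (1 : ℝ) = Real.exp 0 := Real.exp_zero.symm
    _ < Real.exp h := Real.exp_lt_exp.mpr hh
  have ha0 : (a : ℂ) ≠ 0 := by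
    simp only [ha, ne_eq, Complex.ofReal_eq_zero]
    linarith
  have hcF : cpx F = (e : ℂ) • 1 + (a : ℂ) • cpx K := by
    rw [hF, cpx_add_s17, cpx_smul_s17, cpx_smul_s17, cpx_one_s17]
  have hcG : cpx G = (a : ℂ) • cpx Ψ := by
    rw [hG, cpx_smul_s17]
  have hcΦ : cpx ((1 : Matrix (Fin N × Fin n) (Fin N × Fin n) ℝ) + K) = 1 + cpx K := by
    rw [cpx_add_s17, cpx_one_s17]
  constructor
  · -- Controllable → PBH
    intro hc s v h1 h2
    rw [hcΦ] at h1
    rw [Matrix.vecMul_sub, sub_eq_zero, vecMul_smulMat, Matrix.vecMul_one,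
      Matrix.vecMul_add, Matrix.vecMul_one] at h1
    have hvK : v ᵥ* cpx K = (s - 1) • v := by
      rw [sub_smul, one_smul, h1]
      abel
    have hvF : v ᵥ* cpx F = ((e : ℂ) + (a : ℂ) * (s - 1)) • v := by
      rw [hcF, Matrix.vecMul_add, vecMul_smulMat, vecMul_smulMat, Matrix.vecMul_one,
        hvK, smul_smul, add_smul]
    have hvG : v ᵥ* cpx G = 0 := by
      rw [hcG, vecMul_smulMat, h2, smul_zero]
    exact ctrb_to_pbh F G (cpx_isUnit F hinv) hc _ v hvF hvG
  · -- PBH → Controllable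
    intro hpbh
    apply pbh_to_ctrb
    intro s v h1 h2
    rw [hcF, Matrix.vecMul_add, vecMul_smulMat, vecMul_smulMat, Matrix.vecMul_one] at h1
    have hvK : v ᵥ* cpx K = ((a : ℂ)⁻¹ * (s - e)) • v := by
      have h3 : (a : ℂ) • (v ᵥ* cpx K) = (s - (e : ℂ)) • v := by
        rw [sub_smul, ← h1]
        abel
      have h4 := congrArg (fun w => (a : ℂ)⁻¹ • w) h3
      simp only [smul_smul] at h4
      rw [inv_mul_cancel₀ ha0, one_smul] at h4
      exact h4
    have hvΨ : v ᵥ* cpx Ψ = 0 := by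
      rw [hcG, vecMul_smulMat] at h2
      exact (smul_eq_zero.mp h2).resolve_left ha0
    apply hpbh (1 + (a : ℂ)⁻¹ * (s - e)) v
    · rw [hcΦ, Matrix.vecMul_sub, vecMul_smulMat, Matrix.vecMul_one,
        Matrix.vecMul_add, Matrix.vecMul_one, hvK, add_smul, one_smul]
      abel
    · exact hvΨ
end
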